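/- Let U, P, V be relations on a set X with P ∩ V ⊆ U, and suppose the family {P(x) : x ∈ X} has cardinality k ∈ ℕ. Let (N_i)_{i∈ℕ} be strictly increasing sets, and suppose there are indices i₁ < i₂ < ⋯ < i_{k+1} and points x_{i_m} ∈ N_{i_m} \ N_{i_m - 1} such that for each m, V(x_{i_m}) = N_q for a common q > i_{k+1} and U(x_{i_m}) = N_{i_m}. Then two of the sets P(x_{i_m}) coincide, yielding a contradiction; hence at most k such indices can exist. -/
import Mathlib


/-- The injectivity/pigeonhole step: if `P ∩ V ⊆ U` pointwise, the family
`{P x : x ∈ X}` has exactly `k` members, `(N i)` is strictly increasing, and there are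
`k + 1` indices `i 0 < ⋯ < i k` with points `x m ∈ N (i m) \ N (i m - 1)` such that
`V (x m) = N q` (for a common `q` beyond the last index) and `U (x m) = N (i m)`, then
we reach a contradiction: hence at most `k` such indices can exist. -/
theorem pigeonhole_contradiction {X : Type*} (U P V : X → Set X)
    (hPV : ∀ x, P x ∩ V x ⊆ U x) (hPrefl : ∀ x, x ∈ P x)
    (k : ℕ) (hPfin : (Set.range P).Finite) (hPcard : (Set.range P).ncard = k)
    (N : ℕ → Set X) (hmono : ∀ n, N n ⊂ N (n + 1))
    (i : Fin (k + 1) → ℕ) (hi : StrictMono i)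
    (q : ℕ) (hq : i (Fin.last k) < q)
    (x : Fin (k + 1) → X) (hx : ∀ m, x m ∈ N (i m) \ N (i m - 1))
    (hV : ∀ m, V (x m) = N q) (hU : ∀ m, U (x m) = N (i m)) :
    False := by
  have hNmono : Monotone N := monotone_nat_of_le_succ fun n => (hmono n).subset
  -- the map m ↦ P (x m) is injective
  have hinj : Function.Injective fun m : Fin (k + 1) => P (x m) := by
    intro a b hab
    by_contra hne
    wlog hlt : a < b generalizing a b
    · exact this hab.symm (Ne.symm hne) (lt_of_le_of_ne (not_lt.mp hlt) (Ne.symm hne))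
    -- x b ∈ P (x a) ∩ V (x a) ⊆ U (x a) = N (i a) ⊆ N (i b - 1), contradiction
    have h1 : x b ∈ P (x a) := by
      simp only [] at hab
      rw [hab]; exact hPrefl (x b)
    have h2 : x b ∈ V (x a) := by
      rw [hV a]
      exact hNmono (le_of_lt (lt_of_le_of_lt (hi.monotone (Fin.le_last b)) hq)) (hx b).1
    have h3 : x b ∈ N (i a) := by
      have := hPV (x a) ⟨h1, h2⟩
      rwa [hU a] at this
    have h4 : i a ≤ i b - 1 := Nat.le_sub_one_of_lt (hi hlt)
    exact (hx b).2 (hNmono h4 h3)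
  -- pigeonhole: k + 1 ≤ k
  have : Nat.card (Fin (k + 1)) ≤ Nat.card (Set.range P) := by
    have hinj' : Function.Injective fun m : Fin (k + 1) =>
        (⟨P (x m), Set.mem_range_self _⟩ : Set.range P) := by
      intro a b hab
      exact hinj (Subtype.ext_iff.mp hab)
    haveI : Finite (Set.range P) := hPfin
    exact Nat.card_le_card_of_injective _ hinj'
  rw [Nat.card_eq_fintype_card, Fintype.card_fin, Nat.card_coe_set_eq, hPcard] at this
  omega
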